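/- Let (N,h) be a compact Riemannian metric space and consider the product metric space M = N × ℝ with distance d((x,s),(y,t))² = d_N(x,y)² + |s−t|². If γ : ℝ → M is a unit-speed line (i.e. d(γ(s),γ(t)) = |s−t| for all s,t) whose ℝ-component tends to −∞ as t → −∞ and to +∞ as t → +∞, and γ(0) = (x,0), then γ(t) = (x,t) for all t ∈ ℝ. -/
import Mathlib


/-- In the ℓ²-product `N × ℝ` of a compact metric space `N` with the line,
any unit-speed line whose `ℝ`-component goes from `-∞` to `+∞` and which passes through
`(x, 0)` at time `0` is the vertical line `t ↦ (x, t)`. -/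
theorem stmt0 {N : Type*} [MetricSpace N] [CompactSpace N]
    (γ : ℝ → N × ℝ) (x : N)
    (hline : ∀ s t : ℝ,
      Real.sqrt (dist (γ s).1 (γ t).1 ^ 2 + |(γ s).2 - (γ t).2| ^ 2) = |s - t|)
    (h0 : γ 0 = (x, 0))
    (hbot : Filter.Tendsto (fun t => (γ t).2) Filter.atBot Filter.atBot)
    (htop : Filter.Tendsto (fun t => (γ t).2) Filter.atTop Filter.atTop) :
    ∀ t : ℝ, γ t = (x, t) := by
  set σ : ℝ → ℝ := fun t => (γ t).2 with hσdef
  have key : ∀ s t : ℝ, dist (γ s).1 (γ t).1 ^ 2 + (σ s - σ t) ^ 2 = (s - t) ^ 2 := by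
    intro s t
    have h := hline s t
    have h1 : dist (γ s).1 (γ t).1 ^ 2 + |σ s - σ t| ^ 2 = |s - t| ^ 2 := by
      rw [← h, Real.sq_sqrt (by positivity)]
    simpa [sq_abs] using h1
  set D := Metric.diam (Set.univ : Set N) with hDdef
  have hD : (0:ℝ) ≤ D := Metric.diam_nonneg
  have hdistD : ∀ s t : ℝ, dist (γ s).1 (γ t).1 ≤ D := fun s t =>
    Metric.dist_le_diam_of_mem isCompact_univ.isBounded (Set.mem_univ _) (Set.mem_univ _)
  have hlip : ∀ s t : ℝ, |σ s - σ t| ≤ |s - t| := by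
    intro s t
    have hk := key s t
    nlinarith [dist_nonneg (x := (γ s).1) (y := (γ t).1), abs_nonneg (σ s - σ t),
      abs_nonneg (s - t), sq_abs (σ s - σ t), sq_abs (s - t),
      sq_nonneg (dist (γ s).1 (γ t).1)]
  have hσ0 : σ 0 = 0 := by simp [hσdef, h0]
  obtain ⟨B, hB⟩ := Filter.eventually_atTop.1 (htop.eventually_ge_atTop 0)
  obtain ⟨A, hA⟩ := Filter.eventually_atBot.1 (hbot.eventually_le_atBot 0)
  have mono : ∀ s t : ℝ, s ≤ t → σ t - σ s = t - s := by
    intro s t hst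
    have hle : σ t - σ s ≤ t - s := by
      have h := hlip t s
      rw [abs_of_nonneg (by linarith : (0:ℝ) ≤ t - s)] at h
      exact le_trans (le_abs_self _) h
    have hge : t - s ≤ σ t - σ s := by
      refine le_of_forall_pos_le_add ?_
      intro ε hε
      set pad := (D ^ 2 + ε ^ 2) / ε with hpaddef
      have hpad : pad * ε = D ^ 2 + ε ^ 2 := div_mul_cancel₀ _ (ne_of_gt hε)
      have hpad0 : 0 ≤ pad := by positivity
      set a := min A s with hadef
      set b := max B t + pad with hbdef
      have has : a ≤ s := min_le_right _ _
      have hbt : t ≤ b := le_add_of_le_of_nonneg (le_max_right _ _) hpad0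
      have hσa : σ a ≤ 0 := hA a (min_le_left _ _)
      have hσb : 0 ≤ σ b := hB b (le_add_of_le_of_nonneg (le_max_left _ _) hpad0)
      have hLpad : a + pad ≤ b := by
        have : a ≤ max B t := le_trans has (le_trans hst (le_max_right _ _))
        linarith
      -- distance of σ b and σ a
      have h3 : (b - a) ^ 2 - D ^ 2 ≤ (σ b - σ a) ^ 2 := by
        have hk := key b a
        have hd := hdistD b a
        nlinarith [dist_nonneg (x := (γ b).1) (y := (γ a).1)]
      have h4 : b - a - ε ≤ σ b - σ a := by
        nlinarith [sq_nonneg (σ b - σ a), sq_nonneg (b - a - ε - (σ b - σ a)),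
          mul_pos hε hε, sq_nonneg (b - a - ε + (σ b - σ a))]
      have h1 : σ b - σ t ≤ b - t := by
        have h := hlip b t
        rw [abs_of_nonneg (by linarith : (0:ℝ) ≤ b - t)] at h
        exact le_trans (le_abs_self _) h
      have h2 : σ s - σ a ≤ s - a := by
        have h := hlip s a
        rw [abs_of_nonneg (by linarith : (0:ℝ) ≤ s - a)] at h
        exact le_trans (le_abs_self _) h
      linarith
    linarith
  have hσid : ∀ t : ℝ, σ t = t := by
    intro t
    rcases le_total 0 t with ht | ht
    · have := mono 0 t ht; rw [hσ0] at this; linarith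
    · have := mono t 0 ht; rw [hσ0] at this; linarith
  intro t
  have hk := key 0 t
  rw [hσid 0, hσid t] at hk
  have hdist : dist (γ 0).1 (γ t).1 = 0 := by
    nlinarith [dist_nonneg (x := (γ 0).1) (y := (γ t).1)]
  have hfst : (γ t).1 = x := by
    have : (γ 0).1 = (γ t).1 := by rwa [dist_eq_zero] at hdist
    rw [← this, h0]
  exact Prod.ext hfst (hσid t)
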